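/- The entropy function f(x) = ∑ᵢ xᵢ ln xᵢ is 1-strongly convex with respect to the 1-norm on the unit simplex: for all x, y in the simplex, f(y) ≥ f(x) + ⟨∇f(x), y − x⟩ + (1/2)‖y − x‖₁², where the inequality is interpreted on the relative interior of the simplex. -/

import Mathlib

open Real Finset

/-- derivative bookkeeping for ψ -/
private lemma psi_hasDeriv (s : ℝ) (hs : 0 < s) :
    HasDerivAt (fun t : ℝ => Real.log t - 3 / 2 * ((t - 1) * (t + 5)) / (t + 2) ^ 2)
      (1 / s - 27 / (s + 2) ^ 3) s := by
  have h2 : s + 2 ≠ 0 := by positivity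
  have h1 : HasDerivAt Real.log (1 / s) s := by
    simpa [one_div] using Real.hasDerivAt_log hs.ne'
  have hnum : HasDerivAt (fun t : ℝ => 3 / 2 * ((t - 1) * (t + 5))) (3 / 2 * (2 * s + 4)) s := by
    have : HasDerivAt (fun t : ℝ => (t - 1) * (t + 5)) ((1) * (s + 5) + (s - 1) * 1) s :=
      ((hasDerivAt_id s).sub_const 1).mul ((hasDerivAt_id s).add_const 5)
    have := this.const_mul (3 / 2 : ℝ)
    refine this.congr_deriv ?_; simp [id_eq]; try ring
  have hden : HasDerivAt (fun t : ℝ => (t + 2) ^ 2) (2 * (s + 2)) s := by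
    have := ((hasDerivAt_id s).add_const 2).pow 2
    refine this.congr_deriv ?_; simp [id_eq]; try ring
  have hdiv := hnum.div hden (by positivity)
  have := h1.sub hdiv
  refine this.congr_deriv ?_
  field_simp
  ring

private lemma phi_hasDeriv (s : ℝ) (hs : 0 < s) :
    HasDerivAt (fun t : ℝ => t * Real.log t - t + 1 - 3 * (t - 1) ^ 2 / (2 * (t + 2)))
      (Real.log s - 3 / 2 * ((s - 1) * (s + 5)) / (s + 2) ^ 2) s := by
  have h2 : (2 : ℝ) * (s + 2) ≠ 0 := by positivity
  have h1 : HasDerivAt (fun t : ℝ => t * Real.log t) (Real.log s + 1) s := by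
    have := (hasDerivAt_id s).mul (Real.hasDerivAt_log hs.ne')
    refine this.congr_deriv ?_
    field_simp; simp only [id_eq]; ring
  have hnum : HasDerivAt (fun t : ℝ => 3 * (t - 1) ^ 2) (3 * (2 * (s - 1))) s := by
    have := (((hasDerivAt_id s).sub_const 1).pow 2).const_mul (3 : ℝ)
    refine this.congr_deriv ?_; simp [id_eq]; try ring
  have hden : HasDerivAt (fun t : ℝ => 2 * (t + 2)) 2 s := by
    have := ((hasDerivAt_id s).add_const 2).const_mul (2 : ℝ)
    simpa using this
  have hdiv := hnum.div hden h2
  have := ((h1.sub (hasDerivAt_id s)).add_const 1).sub hdiv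
  refine this.congr_deriv ?_
  field_simp
  ring

private lemma psi_sign {t : ℝ} (ht : 0 < t) :
    (1 ≤ t → 0 ≤ Real.log t - 3 / 2 * ((t - 1) * (t + 5)) / (t + 2) ^ 2) ∧
    (t ≤ 1 → Real.log t - 3 / 2 * ((t - 1) * (t + 5)) / (t + 2) ^ 2 ≤ 0) := by
  set ψ : ℝ → ℝ := fun t => Real.log t - 3 / 2 * ((t - 1) * (t + 5)) / (t + 2) ^ 2 with hψ
  have hmono : MonotoneOn ψ (Set.Ioi 0) := by
    have hint : interior (Set.Ioi (0:ℝ)) = Set.Ioi 0 := interior_Ioi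
    apply monotoneOn_of_deriv_nonneg (convex_Ioi 0)
    · intro s hs
      exact (psi_hasDeriv s hs).continuousAt.continuousWithinAt
    · intro s hs
      rw [hint] at hs
      exact (psi_hasDeriv s hs).differentiableAt.differentiableWithinAt
    · intro s hs
      rw [hint] at hs
      have hs0 : (0:ℝ) < s := hs
      rw [(psi_hasDeriv s hs).deriv]
      rw [sub_nonneg, div_le_div_iff₀ (by positivity) (by positivity)]
      nlinarith [mul_nonneg (sq_nonneg (s - 1)) (by linarith : (0:ℝ) ≤ s + 8)]
  have hpsi1 : ψ 1 = 0 := by simp [hψ]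
  constructor
  · intro h1
    have := hmono (Set.mem_Ioi.2 one_pos) (Set.mem_Ioi.2 ht) h1
    rw [hpsi1] at this
    exact this
  · intro h1
    have := hmono (Set.mem_Ioi.2 ht) (Set.mem_Ioi.2 one_pos) h1
    rw [hpsi1] at this
    exact this

private lemma phi_nonneg {t : ℝ} (ht : 0 < t) :
    3 * (t - 1) ^ 2 / (2 * (t + 2)) ≤ t * Real.log t - t + 1 := by
  set φ : ℝ → ℝ := fun t => t * Real.log t - t + 1 - 3 * (t - 1) ^ 2 / (2 * (t + 2)) with hφ
  have hφ1 : φ 1 = 0 := by simp [hφ]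
  have key : 0 ≤ φ t := by
    rcases le_total 1 t with h1 | h1
    · have hmono : MonotoneOn φ (Set.Ici 1) := by
        apply monotoneOn_of_deriv_nonneg (convex_Ici 1)
        · intro s hs
          have hs0 : (0:ℝ) < s := lt_of_lt_of_le one_pos hs
          exact (phi_hasDeriv s hs0).continuousAt.continuousWithinAt
        · intro s hs
          rw [interior_Ici] at hs
          have hs0 : (0:ℝ) < s := lt_trans one_pos hs
          exact (phi_hasDeriv s hs0).differentiableAt.differentiableWithinAt
        · intro s hs
          rw [interior_Ici] at hs
          have hs0 : (0:ℝ) < s := lt_trans one_pos hs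
          rw [(phi_hasDeriv s hs0).deriv]
          exact (psi_sign hs0).1 hs.le
      have := hmono (Set.mem_Ici.2 le_rfl) (Set.mem_Ici.2 h1) h1
      rw [hφ1] at this
      exact this
    · have hanti : AntitoneOn φ (Set.Ioc 0 1) := by
        apply antitoneOn_of_deriv_nonpos (convex_Ioc 0 1)
        · intro s hs
          exact (phi_hasDeriv s hs.1).continuousAt.continuousWithinAt
        · intro s hs
          rw [interior_Ioc] at hs
          exact (phi_hasDeriv s hs.1).differentiableAt.differentiableWithinAt
        · intro s hs
          rw [interior_Ioc] at hs
          rw [(phi_hasDeriv s hs.1).deriv]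
          exact (psi_sign hs.1).2 hs.2.le
      have := hanti (Set.mem_Ioc.2 ⟨ht, h1⟩) (Set.mem_Ioc.2 ⟨one_pos, le_rfl⟩) h1
      rw [hφ1] at this
      exact this
  simp only [hφ] at key
  linarith

private lemma kl_pointwise {a b : ℝ} (ha : 0 < a) (hb : 0 < b) :
    3 * (a - b) ^ 2 / (2 * (a + 2 * b)) ≤ a * Real.log a - a * Real.log b - a + b := by
  have ht : 0 < a / b := div_pos ha hb
  have h := phi_nonneg ht
  have hlog : Real.log (a / b) = Real.log a - Real.log b := Real.log_div ha.ne' hb.ne'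
  rw [hlog] at h
  have hmul := mul_le_mul_of_nonneg_left h hb.le
  have hposab : (0:ℝ) < a + 2 * b := by positivity
  have e1 : b * (a / b * (Real.log a - Real.log b) - a / b + 1)
      = a * Real.log a - a * Real.log b - a + b := by
    field_simp
  have e2 : b * (3 * (a / b - 1) ^ 2 / (2 * (a / b + 2)))
      = 3 * (a - b) ^ 2 / (2 * (a + 2 * b)) := by
    field_simp
  rw [e1, e2] at hmul
  exact hmul

/-- The entropy `f(x) = ∑ xᵢ ln xᵢ` is 1-strongly convex w.r.t. the 1-norm on the
(relative interior of the) unit simplex. -/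
theorem stmt_10 (n : ℕ) (x y : Fin n → ℝ)
    (hx : ∀ i, 0 < x i) (hxs : ∑ i, x i = 1)
    (hy : ∀ i, 0 < y i) (hys : ∑ i, y i = 1) :
    (∑ i, x i * Real.log (x i)) + (∑ i, (Real.log (x i) + 1) * (y i - x i)) +
      (1 / 2) * (∑ i, |y i - x i|) ^ 2 ≤ ∑ i, y i * Real.log (y i) := by
  have hg : ∀ i, (0:ℝ) < y i + 2 * x i := fun i => by have := hx i; have := hy i; linarith
  have h3 : ∑ i, (y i + 2 * x i) = 3 := by
    rw [Finset.sum_add_distrib, ← Finset.mul_sum, hxs, hys]; norm_num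
  have hCS : (∑ i, |y i - x i|) ^ 2 / 3 ≤ ∑ i, (y i - x i) ^ 2 / (y i + 2 * x i) := by
    have := Finset.sq_sum_div_le_sum_sq_div Finset.univ (fun i => |y i - x i|)
      (g := fun i => y i + 2 * x i) (fun i _ => hg i)
    rw [h3] at this
    simpa [sq_abs] using this
  have hKL : ∑ i, 3 * (y i - x i) ^ 2 / (2 * (y i + 2 * x i)) ≤
      ∑ i, (y i * Real.log (y i) - y i * Real.log (x i) - y i + x i) :=
    Finset.sum_le_sum fun i _ => kl_pointwise (hy i) (hx i)
  have hEq : ∑ i, 3 * (y i - x i) ^ 2 / (2 * (y i + 2 * x i)) =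
      (3 / 2) * ∑ i, (y i - x i) ^ 2 / (y i + 2 * x i) := by
    rw [Finset.mul_sum]
    refine Finset.sum_congr rfl fun i _ => ?_
    have := (hg i).ne'
    field_simp
    try ring
  have hsum1 : ∑ i, (y i * Real.log (y i) - y i * Real.log (x i) - y i + x i)
      = (∑ i, y i * Real.log (y i)) - ∑ i, y i * Real.log (x i) := by
    rw [Finset.sum_add_distrib, Finset.sum_sub_distrib, Finset.sum_sub_distrib, hxs, hys]; ring
  have hLHS : (∑ i, x i * Real.log (x i)) + (∑ i, (Real.log (x i) + 1) * (y i - x i))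
      = ∑ i, y i * Real.log (x i) := by
    rw [← Finset.sum_add_distrib]
    have h : ∀ i ∈ Finset.univ, x i * Real.log (x i) + (Real.log (x i) + 1) * (y i - x i)
        = y i * Real.log (x i) + (y i - x i) := fun i _ => by ring
    rw [Finset.sum_congr rfl h, Finset.sum_add_distrib, Finset.sum_sub_distrib, hxs, hys]; ring
  have hhalf : (1 / 2 : ℝ) * (∑ i, |y i - x i|) ^ 2
      = (3 / 2) * ((∑ i, |y i - x i|) ^ 2 / 3) := by ring
  rw [hsum1] at hKL
  rw [hEq] at hKL
  have : (3 / 2 : ℝ) * ((∑ i, |y i - x i|) ^ 2 / 3)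
      ≤ (3 / 2) * ∑ i, (y i - x i) ^ 2 / (y i + 2 * x i) := by linarith
  linarith [hLHS, hhalf]
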